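/- Let r > 4, θ > 0 and σ > 0. If x > 0 satisfies (√(θ² + σ²)/θ) · K_{(r−3)/2}((√(θ² + σ²)/σ²)·x) / K_{(r−1)/2}((√(θ² + σ²)/σ²)·x) = 1 (the mode equation of the variance-gamma distribution VG(r, θ, σ, 0)), then x > (θ/2)·[r − 2 + √((θ²(r − 2)² + σ²(r − 4)²)/(θ² + σ²))]. Equality holds if r = 4 and the inequality is reversed for 2 < r < 4. -/

import Mathlib

open Real MeasureTheory

open Set

/-- Modified Bessel function of the second kind. -/
noncomputable def besselK (ν x : ℝ) : ℝ :=
  ∫ t in Set.Ioi (0:ℝ), Real.exp (-x * Real.cosh t) * Real.cosh (ν * t)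

-- basic pointwise bound
lemma key_ptwise (x c : ℝ) (hx : 0 < x) (t : ℝ) (ht : 0 ≤ t) :
    Real.exp (-x * Real.cosh t) * Real.exp (c * t) ≤
      Real.exp ((c+1)^2 / x - x) * Real.exp (-t) := by
  rw [← Real.exp_add, ← Real.exp_add]
  apply Real.exp_le_exp.2
  have h1 : 1 + t + t^2/2 ≤ Real.exp t := by
    have := Real.sum_le_exp_of_nonneg ht 3
    simp [Finset.sum_range_succ] at this
    nlinarith [this]
  have h2 : 1 - t ≤ Real.exp (-t) := by
    nlinarith [Real.add_one_le_exp (-t)]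
  have hcosh : 1 + t^2/4 ≤ Real.cosh t := by
    rw [Real.cosh_eq]
    nlinarith
  have hdiv : (c+1)^2/x*x = (c+1)^2 := div_mul_cancel₀ _ hx.ne'
  nlinarith [sq_nonneg ((c+1) - x*t/2), mul_le_mul_of_nonneg_left hcosh hx.le,
    mul_pos hx hx, sq_nonneg t]

lemma cosh_le_exp_abs (u : ℝ) : Real.cosh u ≤ Real.exp |u| := by
  have h1 := Real.exp_le_exp.2 (le_abs_self u)
  have h2 := Real.exp_le_exp.2 (neg_le_abs u)
  rw [Real.cosh_eq]; linarith

lemma abs_sinh_le_cosh (u : ℝ) : |Real.sinh u| ≤ Real.cosh u := by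
  rw [Real.abs_sinh, ← Real.cosh_abs]
  have := Real.exp_pos (-|u|)
  rw [Real.sinh_eq, Real.cosh_eq]; linarith

lemma integrable_exp_mul (x c : ℝ) (hx : 0 < x) :
    IntegrableOn (fun t => Real.exp (-x * Real.cosh t) * Real.exp (c * t)) (Ioi 0) := by
  apply Integrable.mono'
    (((exp_neg_integrableOn_Ioi 0 one_pos)).const_mul (Real.exp ((c+1)^2/x - x)))
  · exact ((Real.continuous_exp.comp (by continuity)).mul
      (Real.continuous_exp.comp (by continuity))).aestronglyMeasurable
  · filter_upwards [ae_restrict_mem measurableSet_Ioi] with t ht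
    have h0 : (0:ℝ) ≤ Real.exp (-x * Real.cosh t) * Real.exp (c * t) :=
      mul_nonneg (Real.exp_pos _).le (Real.exp_pos _).le
    rw [Real.norm_eq_abs, abs_of_nonneg h0]
    simpa using key_ptwise x c hx t (le_of_lt ht)

lemma integrableOn_dom {f : ℝ → ℝ} (hf : Continuous f) {x : ℝ} (c : ℝ) (hx : 0 < x)
    (hb : ∀ t, 0 ≤ t → |f t| ≤ Real.exp (c * t)) :
    IntegrableOn (fun t => Real.exp (-x * Real.cosh t) * f t) (Ioi 0) := by
  apply Integrable.mono' (integrable_exp_mul x c hx)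
  · exact ((Real.continuous_exp.comp (by continuity)).mul hf).aestronglyMeasurable
  · filter_upwards [ae_restrict_mem measurableSet_Ioi] with t ht
    rw [Real.norm_eq_abs, abs_mul, abs_of_nonneg (Real.exp_pos _).le]
    exact mul_le_mul_of_nonneg_left (hb t (le_of_lt ht)) (Real.exp_pos _).le

lemma integrable_besselK (ν : ℝ) {x : ℝ} (hx : 0 < x) :
    IntegrableOn (fun t => Real.exp (-x * Real.cosh t) * Real.cosh (ν * t)) (Ioi 0) := by
  apply integrableOn_dom (by continuity) (|ν|) hx
  intro t ht
  rw [abs_of_nonneg (Real.cosh_pos _).le]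
  have h : abs (ν*t) = abs ν * t := by rw [abs_mul, abs_of_nonneg ht]
  simpa [h] using cosh_le_exp_abs (ν*t)

lemma besselK_pos (ν : ℝ) {x : ℝ} (hx : 0 < x) : 0 < besselK ν x := by
  rw [besselK]
  have hnn : 0 ≤ᵐ[volume.restrict (Ioi (0:ℝ))]
      fun t => Real.exp (-x * Real.cosh t) * Real.cosh (ν * t) :=
    Filter.Eventually.of_forall fun t =>
      mul_nonneg (Real.exp_pos _).le (Real.cosh_pos _).le
  rw [setIntegral_pos_iff_support_of_nonneg_ae hnn (integrable_besselK ν hx)]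
  have hsupp : (Ioi (0:ℝ)) ⊆ Function.support
      fun t => Real.exp (-x * Real.cosh t) * Real.cosh (ν * t) := by
    intro t _
    exact (mul_pos (Real.exp_pos _) (Real.cosh_pos _)).ne'
  calc (0:ENNReal) < volume (Ioi (0:ℝ)) := by simp
    _ ≤ volume (Function.support (fun t => Real.exp (-x * Real.cosh t) * Real.cosh (ν * t))
          ∩ Ioi 0) := by
        apply measure_mono
        intro t ht; exact ⟨hsupp ht, ht⟩

lemma besselK_neg (ν x : ℝ) : besselK (-ν) x = besselK ν x := by
  unfold besselK
  congr 1; funext t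
  simp [neg_mul, Real.cosh_neg]

lemma besselK_le (ν : ℝ) {x : ℝ} (hx : 0 < x) :
    besselK ν x ≤ Real.exp ((|ν|+1)^2/x - x) := by
  have h : besselK ν x ≤ ∫ t in Ioi (0:ℝ), Real.exp ((|ν|+1)^2/x - x) * Real.exp (-t) := by
    apply setIntegral_mono_on (integrable_besselK ν hx)
    · have := (exp_neg_integrableOn_Ioi 0 one_pos).const_mul (Real.exp ((|ν|+1)^2/x - x))
      simp only [neg_one_mul] at this; exact this
    · exact measurableSet_Ioi
    · intro t ht
      calc Real.exp (-x * Real.cosh t) * Real.cosh (ν * t)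
          ≤ Real.exp (-x * Real.cosh t) * Real.exp (|ν| * t) := by
            apply mul_le_mul_of_nonneg_left _ (Real.exp_pos _).le
            have h1 : abs (ν*t) = abs ν * t := by rw [abs_mul, abs_of_nonneg (le_of_lt (mem_Ioi.1 ht))]
            simpa [h1] using cosh_le_exp_abs (ν*t)
        _ ≤ Real.exp ((|ν|+1)^2/x - x) * Real.exp (-t) := key_ptwise x (|ν|) hx t (le_of_lt ht)
  calc besselK ν x ≤ _ := h
    _ = Real.exp ((|ν|+1)^2/x - x) := by
        rw [integral_const_mul, integral_exp_neg_Ioi]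
        simp

lemma integrable_sinh_sinh (ν : ℝ) {x : ℝ} (hx : 0 < x) :
    IntegrableOn (fun t => Real.exp (-x * Real.cosh t) * (Real.sinh t * Real.sinh (ν * t)))
      (Ioi 0) := by
  apply integrableOn_dom (by continuity) (|ν|+1) hx
  intro t ht
  have h1 : abs (ν*t) = abs ν * t := by rw [abs_mul, abs_of_nonneg ht]
  calc |Real.sinh t * Real.sinh (ν*t)| = |Real.sinh t| * |Real.sinh (ν*t)| := abs_mul _ _
    _ ≤ Real.cosh t * Real.cosh (ν*t) :=
        mul_le_mul (abs_sinh_le_cosh t) (abs_sinh_le_cosh _) (abs_nonneg _) (Real.cosh_pos _).le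
    _ ≤ Real.exp (abs t) * Real.exp (abs (ν*t)) :=
        mul_le_mul (cosh_le_exp_abs t) (cosh_le_exp_abs _) (Real.cosh_pos _).le (Real.exp_pos _).le
    _ = Real.exp ((|ν|+1)*t) := by
        rw [← Real.exp_add, h1, abs_of_nonneg ht]; ring_nf

lemma sinh_sinh_integral (ν : ℝ) {x : ℝ} (hx : 0 < x) :
    x * ∫ t in Ioi (0:ℝ), Real.exp (-x * Real.cosh t) * (Real.sinh t * Real.sinh (ν * t))
      = ν * besselK ν x := by
  set f : ℝ → ℝ := fun t => Real.exp (-x * Real.cosh t) * Real.sinh (ν * t) with hf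
  set f' : ℝ → ℝ := fun t => Real.exp (-x * Real.cosh t) *
      (ν * Real.cosh (ν * t) - x * (Real.sinh t * Real.sinh (ν * t))) with hf'
  have hderiv : ∀ t : ℝ, HasDerivAt f (f' t) t := by
    intro t
    have h1 : HasDerivAt (fun t : ℝ => Real.exp (-x * Real.cosh t))
        (-x * Real.sinh t * Real.exp (-x * Real.cosh t)) t := by
      have := ((Real.hasDerivAt_cosh t).const_mul (-x)).exp
      simpa [mul_comm] using this
    have h2 : HasDerivAt (fun t : ℝ => Real.sinh (ν * t)) (ν * Real.cosh (ν * t)) t := by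
      have := (Real.hasDerivAt_sinh (ν*t)).comp t ((hasDerivAt_id t).const_mul ν)
      simpa [mul_comm, Function.comp_def] using this
    have := h1.mul h2
    refine this.congr_deriv ?_
    simp only [hf']; ring
  have hint : IntegrableOn f' (Ioi 0) := by
    have h1 := (integrable_besselK ν hx).const_mul ν
    have h2 := (integrable_sinh_sinh ν hx).const_mul x
    have h3 := h1.sub h2
    apply h3.congr (Filter.Eventually.of_forall fun t => ?_)
    simp only [Pi.sub_apply, hf']; ring
  have hlim : Filter.Tendsto f Filter.atTop (nhds 0) := by
    have hb : ∀ t : ℝ, 0 ≤ t → |f t| ≤ Real.exp ((|ν|+1)^2/x - x) * Real.exp (-t) := by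
      intro t ht
      have h1 : abs (ν*t) = abs ν * t := by rw [abs_mul, abs_of_nonneg ht]
      calc |f t| = Real.exp (-x * Real.cosh t) * |Real.sinh (ν*t)| := by
            rw [hf]; rw [abs_mul, abs_of_nonneg (Real.exp_pos _).le]
        _ ≤ Real.exp (-x * Real.cosh t) * Real.exp (|ν| * t) := by
            apply mul_le_mul_of_nonneg_left _ (Real.exp_pos _).le
            calc |Real.sinh (ν*t)| ≤ Real.cosh (ν*t) := abs_sinh_le_cosh _
              _ ≤ Real.exp (abs (ν*t)) := cosh_le_exp_abs _
              _ = Real.exp ((|ν|)*t) := by rw [h1]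
        _ ≤ Real.exp ((|ν|+1)^2/x - x) * Real.exp (-t) := key_ptwise x (|ν|) hx t ht
    have hb0 : Filter.Tendsto (fun t : ℝ => Real.exp ((|ν|+1)^2/x - x) * Real.exp (-t))
        Filter.atTop (nhds 0) := by
      simpa using (Real.tendsto_exp_neg_atTop_nhds_zero).const_mul (Real.exp ((|ν|+1)^2/x - x))
    apply squeeze_zero_norm' _ hb0
    filter_upwards [Filter.eventually_ge_atTop (0:ℝ)] with t ht
    simpa [Real.norm_eq_abs] using hb t ht
  have key := integral_Ioi_of_hasDerivAt_of_tendsto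
    (hderiv 0).continuousAt.continuousWithinAt (fun t _ => hderiv t) hint hlim
  have hf0 : f 0 = 0 := by simp [hf]
  rw [hf0, sub_zero] at key
  have hsplit : ∫ t in Ioi (0:ℝ), f' t
      = ν * besselK ν x - x * ∫ t in Ioi (0:ℝ),
          Real.exp (-x * Real.cosh t) * (Real.sinh t * Real.sinh (ν * t)) := by
    rw [besselK, ← integral_const_mul, ← integral_const_mul, ← integral_sub]
    · congr 1; funext t; simp only [hf']; ring
    · exact (integrable_besselK ν hx).const_mul ν
    · exact (integrable_sinh_sinh ν hx).const_mul x
  rw [key] at hsplit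
  linarith [hsplit]

lemma besselK_recurrence (ν : ℝ) {x : ℝ} (hx : 0 < x) :
    besselK (ν+1) x - besselK (ν-1) x = (2*ν/x) * besselK ν x := by
  have h1 : besselK (ν+1) x - besselK (ν-1) x
      = ∫ t in Ioi (0:ℝ), 2 * (Real.exp (-x * Real.cosh t) * (Real.sinh t * Real.sinh (ν*t))) := by
    rw [besselK, besselK, ← integral_sub (integrable_besselK _ hx) (integrable_besselK _ hx)]
    congr 1; funext t
    have e1 : (ν+1)*t = ν*t + t := by ring
    have e2 : (ν-1)*t = ν*t - t := by ring
    rw [e1, e2, Real.cosh_add, Real.cosh_sub]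
    ring
  rw [h1, integral_const_mul]
  have h2 := sinh_sinh_integral ν hx
  rw [div_mul_eq_mul_div, eq_div_iff hx.ne']
  linear_combination 2 * h2

lemma besselK_hasDerivAt (ν : ℝ) {x : ℝ} (hx : 0 < x) :
    HasDerivAt (besselK ν) (-(besselK (ν+1) x + besselK (ν-1) x)/2) x := by
  set F : ℝ → ℝ → ℝ := fun y t => Real.exp (-y * Real.cosh t) * Real.cosh (ν * t) with hF
  set F' : ℝ → ℝ → ℝ := fun y t =>
    -(Real.cosh t * (Real.exp (-y * Real.cosh t) * Real.cosh (ν * t))) with hF'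
  have hmeas : ∀ᶠ y in nhds x, AEStronglyMeasurable (F y) (volume.restrict (Ioi 0)) := by
    apply Filter.Eventually.of_forall
    intro y
    exact ((Real.continuous_exp.comp (by continuity)).mul (by continuity)).aestronglyMeasurable
  have hint : Integrable (F x) (volume.restrict (Ioi 0)) := integrable_besselK ν hx
  have hmeas' : AEStronglyMeasurable (F' x) (volume.restrict (Ioi 0)) := by
    apply Continuous.aestronglyMeasurable
    continuity
  have hbound : ∀ᵐ t ∂(volume.restrict (Ioi (0:ℝ))), ∀ y ∈ Metric.ball x (x/2),
      ‖F' y t‖ ≤ Real.cosh t * (Real.exp (-(x/2) * Real.cosh t) * Real.cosh (ν * t)) := by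
    filter_upwards [ae_restrict_mem measurableSet_Ioi] with t _
    intro y hy
    rw [Metric.mem_ball, Real.dist_eq, abs_lt] at hy
    have hy2 : x/2 ≤ y := by linarith [hy.1]
    rw [Real.norm_eq_abs, hF']
    rw [abs_neg, abs_mul, abs_of_nonneg (Real.cosh_pos t).le, abs_mul,
      abs_of_nonneg (Real.exp_pos _).le, abs_of_nonneg (Real.cosh_pos _).le]
    have h5 : Real.exp (-y * Real.cosh t) ≤ Real.exp (-(x/2) * Real.cosh t) := by
      apply Real.exp_le_exp.2
      have := (Real.cosh_pos t).le
      nlinarith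
    nlinarith [Real.cosh_pos t, Real.cosh_pos (ν*t), Real.exp_pos (-y * Real.cosh t),
      mul_le_mul_of_nonneg_left h5 (Real.cosh_pos (ν*t)).le]
  have hbint : Integrable (fun t => Real.cosh t *
      (Real.exp (-(x/2) * Real.cosh t) * Real.cosh (ν * t))) (volume.restrict (Ioi 0)) := by
    have h6 : IntegrableOn (fun t => Real.exp (-(x/2) * Real.cosh t) *
        (Real.cosh t * Real.cosh (ν * t))) (Ioi 0) := by
      apply integrableOn_dom (by continuity) (1 + |ν|) (half_pos hx)
      intro t ht
      have h1 : abs (ν*t) = abs ν * t := by rw [abs_mul, abs_of_nonneg ht]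
      rw [abs_mul, abs_of_nonneg (Real.cosh_pos t).le, abs_of_nonneg (Real.cosh_pos _).le]
      calc Real.cosh t * Real.cosh (ν*t) ≤ Real.exp (abs t) * Real.exp (abs (ν*t)) :=
            mul_le_mul (cosh_le_exp_abs t) (cosh_le_exp_abs _) (Real.cosh_pos _).le
              (Real.exp_pos _).le
        _ = Real.exp ((1+|ν|)*t) := by rw [← Real.exp_add, h1, abs_of_nonneg ht]; ring_nf
    apply h6.congr (Filter.Eventually.of_forall fun t => by ring)
  have hdiff : ∀ᵐ t ∂(volume.restrict (Ioi (0:ℝ))), ∀ y ∈ Metric.ball x (x/2),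
      HasDerivAt (fun y => F y t) (F' y t) y := by
    apply Filter.Eventually.of_forall
    intro t y _
    have h0 : HasDerivAt (fun y : ℝ => -y * Real.cosh t) (-Real.cosh t) y := by
      simpa [neg_mul, Pi.neg_def] using (hasDerivAt_mul_const (c := Real.cosh t) (x := y)).neg
    have h1 := (h0.exp).mul_const (Real.cosh (ν*t))
    apply h1.congr_deriv
    simp only [hF']; ring
  have hmain := hasDerivAt_integral_of_dominated_loc_of_deriv_le (Metric.ball_mem_nhds x (half_pos hx))
    hmeas hint hmeas' hbound hbint hdiff
  have hderiv := hmain.2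
  have heq : (∫ t in Ioi (0:ℝ), F' x t) = -(besselK (ν+1) x + besselK (ν-1) x)/2 := by
    have hptw : (fun t => F' x t) = (fun t =>
        (-(1/2)) * (Real.exp (-x * Real.cosh t) * Real.cosh ((ν+1) * t)) +
        (-(1/2)) * (Real.exp (-x * Real.cosh t) * Real.cosh ((ν-1) * t))) := by
      funext t
      have e1 : (ν+1)*t = ν*t + t := by ring
      have e2 : (ν-1)*t = ν*t - t := by ring
      simp only [hF', e1, e2, Real.cosh_add, Real.cosh_sub]
      ring
    rw [hptw, integral_add ((integrable_besselK _ hx).const_mul _)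
      ((integrable_besselK _ hx).const_mul _), integral_const_mul, integral_const_mul]
    rw [besselK, besselK]; ring
  rw [← heq]
  exact hderiv


lemma besselK_W_deriv (lam : ℝ) {x : ℝ} (hx : 0 < x) :
    HasDerivAt (fun y => y * (besselK (lam+1) y ^ 2 - besselK lam y ^ 2)
      - (2*lam+1) * (besselK lam y * besselK (lam+1) y))
      ((2*lam+1) * (besselK lam x * besselK (lam+1) x) / x) x := by
  have hA := besselK_hasDerivAt lam hx
  have hB := besselK_hasDerivAt (lam+1) hx
  have e : lam+1-1 = lam := by ring
  rw [e] at hB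
  have rec1 := besselK_recurrence lam hx
  have rec2 := besselK_recurrence (lam+1) hx
  rw [e] at rec2
  have hW := ((hasDerivAt_id x).mul ((hB.pow 2).sub (hA.pow 2))).sub
    ((hA.mul hB).const_mul (2*lam+1))
  refine hW.congr_deriv ?_
  simp only [id_eq, Pi.sub_apply, Pi.pow_apply]
  set A := besselK lam x
  set B := besselK (lam+1) x
  set Am := besselK (lam-1) x
  set Bp := besselK (lam+1+1) x
  have eAm : Am = B - 2*lam/x*A := by linarith [rec1]
  have eBp : Bp = A + 2*(lam+1)/x*B := by linarith [rec2]
  rw [eAm, eBp]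
  field_simp
  ring

lemma besselK_le' (ν : ℝ) {x : ℝ} (h1 : 1 ≤ x) :
    besselK ν x ≤ Real.exp ((|ν|+1)^2) * Real.exp (-x) := by
  have hx : 0 < x := lt_of_lt_of_le one_pos h1
  calc besselK ν x ≤ Real.exp ((|ν|+1)^2/x - x) := besselK_le ν hx
    _ ≤ Real.exp ((|ν|+1)^2) * Real.exp (-x) := by
        rw [← Real.exp_add]
        apply Real.exp_le_exp.2
        have h2 : (|ν|+1)^2/x ≤ (|ν|+1)^2 := by
          apply div_le_self (by positivity) h1
        linarith

lemma besselK_W_tendsto (lam : ℝ) :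
    Filter.Tendsto (fun y => y * (besselK (lam+1) y ^ 2 - besselK lam y ^ 2)
      - (2*lam+1) * (besselK lam y * besselK (lam+1) y)) Filter.atTop (nhds 0) := by
  set C := Real.exp ((|lam|+2)^2) with hC
  have hCpos : 0 < C := Real.exp_pos _
  have hboundK : ∀ ν : ℝ, |ν| + 1 ≤ |lam| + 2 → ∀ y : ℝ, 1 ≤ y →
      besselK ν y ≤ C * Real.exp (-y) := by
    intro ν hν y hy
    calc besselK ν y ≤ Real.exp ((|ν|+1)^2) * Real.exp (-y) := besselK_le' ν hy
      _ ≤ C * Real.exp (-y) := by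
          apply mul_le_mul_of_nonneg_right _ (Real.exp_pos _).le
          apply Real.exp_le_exp.2
          have h0 : (0:ℝ) ≤ |ν| + 1 := by positivity
          nlinarith
  have hb1 : |lam| + 1 ≤ |lam| + 2 := by linarith
  have hb2 : |lam+1| + 1 ≤ |lam| + 2 := by
    have := abs_add_le lam 1
    simp at this ⊢
    linarith [this]
  -- the dominating function
  have hg : Filter.Tendsto (fun y : ℝ =>
      (2*y + |2*lam+1|) * (C^2 * (Real.exp (-y) * Real.exp (-y)))) Filter.atTop (nhds 0) := by
    have t1 : Filter.Tendsto (fun y : ℝ => y * Real.exp (-y)) Filter.atTop (nhds 0) := by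
      simpa using tendsto_pow_mul_exp_neg_atTop_nhds_zero 1
    have t2 : Filter.Tendsto (fun y : ℝ => Real.exp (-y)) Filter.atTop (nhds 0) :=
      Real.tendsto_exp_neg_atTop_nhds_zero
    have t3 : Filter.Tendsto (fun y : ℝ =>
        (2*(y*Real.exp (-y)) + |2*lam+1| * Real.exp (-y)) * (C^2 * Real.exp (-y)))
        Filter.atTop (nhds 0) := by
      have hsum : Filter.Tendsto (fun y : ℝ =>
          2*(y*Real.exp (-y)) + |2*lam+1| * Real.exp (-y)) Filter.atTop (nhds 0) := by
        have := (t1.const_mul 2).add (t2.const_mul (|2*lam+1|))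
        simpa using this
      have := hsum.mul (t2.const_mul (C^2))
      simpa using this
    apply t3.congr
    intro y; ring
  apply squeeze_zero_norm' _ hg
  filter_upwards [Filter.eventually_ge_atTop (1:ℝ)] with y hy
  have hy0 : 0 < y := lt_of_lt_of_le one_pos hy
  have hA := besselK_pos lam hy0
  have hB := besselK_pos (lam+1) hy0
  have hAle := hboundK lam hb1 y hy
  have hBle := hboundK (lam+1) hb2 y hy
  have hE : (0:ℝ) < Real.exp (-y) := Real.exp_pos _
  rw [Real.norm_eq_abs]
  have hABle : besselK lam y * besselK (lam+1) y ≤ C^2 * (Real.exp (-y) * Real.exp (-y)) := by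
    calc besselK lam y * besselK (lam+1) y ≤ (C*Real.exp (-y)) * (C*Real.exp (-y)) :=
          mul_le_mul hAle hBle hB.le (by positivity)
      _ = C^2 * (Real.exp (-y) * Real.exp (-y)) := by ring
  have hA2 : besselK lam y ^ 2 ≤ C^2 * (Real.exp (-y) * Real.exp (-y)) := by
    have := mul_le_mul hAle hAle hA.le (by positivity)
    calc besselK lam y ^2 = besselK lam y * besselK lam y := sq (besselK lam y) ▸ by ring
      _ ≤ (C*Real.exp (-y)) * (C*Real.exp (-y)) := this
      _ = C^2 * (Real.exp (-y) * Real.exp (-y)) := by ring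
  have hB2 : besselK (lam+1) y ^ 2 ≤ C^2 * (Real.exp (-y) * Real.exp (-y)) := by
    have := mul_le_mul hBle hBle hB.le (by positivity)
    calc besselK (lam+1) y ^2 = besselK (lam+1) y * besselK (lam+1) y := by ring
      _ ≤ (C*Real.exp (-y)) * (C*Real.exp (-y)) := this
      _ = C^2 * (Real.exp (-y) * Real.exp (-y)) := by ring
  rw [abs_le]
  constructor
  · have h1 : -(besselK lam y^2) ≤ 0 := by nlinarith
    nlinarith [abs_nonneg (2*lam+1), le_abs_self (2*lam+1), neg_abs_le (2*lam+1),
      mul_pos hA hB, sq_nonneg (besselK (lam+1) y)]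
  · nlinarith [abs_nonneg (2*lam+1), le_abs_self (2*lam+1), neg_abs_le (2*lam+1),
      mul_pos hA hB, sq_nonneg (besselK lam y)]

lemma besselK_W_neg (lam : ℝ) (hlam : 0 < 2*lam+1) {x : ℝ} (hx : 0 < x) :
    x * (besselK (lam+1) x ^ 2 - besselK lam x ^ 2)
      - (2*lam+1) * (besselK lam x * besselK (lam+1) x) < 0 := by
  set W : ℝ → ℝ := fun y => y * (besselK (lam+1) y ^ 2 - besselK lam y ^ 2)
      - (2*lam+1) * (besselK lam y * besselK (lam+1) y) with hW
  have hmono : StrictMonoOn W (Ioi 0) := by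
    apply strictMonoOn_of_deriv_pos (convex_Ioi 0)
    · intro y hy
      exact (besselK_W_deriv lam hy).continuousAt.continuousWithinAt
    · intro y hy
      rw [interior_Ioi] at hy
      rw [(besselK_W_deriv lam hy).deriv]
      have p1 := besselK_pos lam hy
      have p2 := besselK_pos (lam+1) hy
      exact div_pos (mul_pos hlam (mul_pos p1 p2)) hy
  have hlim := besselK_W_tendsto lam
  have hle : ∀ y : ℝ, 0 < y → W y ≤ 0 := by
    intro y hy
    apply ge_of_tendsto hlim
    filter_upwards [Filter.eventually_gt_atTop y] with z hz
    exact (hmono hy (lt_trans hy hz) hz).le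
  have h1 : W x < W (x+1) := hmono hx (by linarith : (0:ℝ) < x+1) (by linarith)
  have h2 := hle (x+1) (by linarith)
  exact lt_of_lt_of_le h1 h2

lemma besselK_ratio (lam : ℝ) (hlam : -(1/2) < lam) {x : ℝ} (hx : 0 < x) :
    x * besselK (lam+1) x
      < (lam + 1/2 + Real.sqrt ((lam+1/2)^2 + x^2)) * besselK lam x := by
  set μ := lam + 1/2 with hμ
  have hμpos : 0 < μ := by rw [hμ]; linarith
  set R := Real.sqrt (μ^2 + x^2) with hR
  have hRnn : 0 ≤ R := Real.sqrt_nonneg _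
  have hR2 : R^2 = μ^2 + x^2 := Real.sq_sqrt (by positivity)
  have hA := besselK_pos lam hx
  have hB := besselK_pos (lam+1) hx
  have hWneg := besselK_W_neg lam (by linarith) hx
  set A := besselK lam x
  set B := besselK (lam+1) x
  by_contra hcon
  push_neg at hcon
  have h2 : 2*lam+1 = 2*μ := by rw [hμ]; ring
  rw [h2] at hWneg
  have hRμ : μ ≤ R := by
    have : |μ| ≤ R := by
      rw [hR, ← Real.sqrt_sq_eq_abs]
      exact Real.sqrt_le_sqrt (by nlinarith [sq_nonneg x])
    linarith [le_abs_self μ]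
  have key : 0 ≤ (x*B - (μ+R)*A) * (x*B - (μ-R)*A) := by
    apply mul_nonneg (by linarith)
    nlinarith [mul_pos hx hB, mul_pos hμpos hA]
  have hWx : x*(x*(B^2 - A^2) - 2*μ*(A*B)) < 0 := mul_neg_of_pos_of_neg hx hWneg
  have hsub : (μ^2 - R^2)*A^2 = -(x^2*A^2) := by rw [hR2]; ring
  nlinarith [key, hWx, hsub, sq_nonneg A, mul_pos hA hA]

set_option maxHeartbeats 1000000 in
theorem stmt_11 (r θ σ : ℝ) (hθ : 0 < θ) (hσ : 0 < σ) (x : ℝ) (hx : 0 < x)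
    (hmode : Real.sqrt (θ ^ 2 + σ ^ 2) / θ *
        (besselK ((r - 3) / 2) (Real.sqrt (θ ^ 2 + σ ^ 2) / σ ^ 2 * x) /
          besselK ((r - 1) / 2) (Real.sqrt (θ ^ 2 + σ ^ 2) / σ ^ 2 * x)) = 1) :
    (4 < r → x > θ / 2 * (r - 2 +
      Real.sqrt ((θ ^ 2 * (r - 2) ^ 2 + σ ^ 2 * (r - 4) ^ 2) / (θ ^ 2 + σ ^ 2)))) ∧
    (r = 4 → x = θ / 2 * (r - 2 +
      Real.sqrt ((θ ^ 2 * (r - 2) ^ 2 + σ ^ 2 * (r - 4) ^ 2) / (θ ^ 2 + σ ^ 2)))) ∧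
    (2 < r ∧ r < 4 → x < θ / 2 * (r - 2 +
      Real.sqrt ((θ ^ 2 * (r - 2) ^ 2 + σ ^ 2 * (r - 4) ^ 2) / (θ ^ 2 + σ ^ 2)))) := by
  set s := Real.sqrt (θ^2 + σ^2) with hs
  have hs2 : s^2 = θ^2 + σ^2 := Real.sq_sqrt (by positivity)
  have hspos : 0 < s := Real.sqrt_pos.2 (by positivity)
  clear_value s
  have hθs : θ < s := by nlinarith only [hs2, hθ, hspos, mul_pos hσ hσ]
  set y := s/σ^2*x with hy
  have hypos : 0 < y := by rw [hy]; positivity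
  have hgx : σ^2*y = s*x := by rw [hy]; field_simp
  clear_value y
  clear hy
  set P := besselK ((r-3)/2) y with hP
  set Q := besselK ((r-1)/2) y with hQ
  set Z := besselK ((r-5)/2) y with hZ
  have hPpos : 0 < P := besselK_pos _ hypos
  have hQpos : 0 < Q := besselK_pos _ hypos
  have hZpos : 0 < Z := besselK_pos _ hypos
  have hPQ : s*P = θ*Q := by
    have h := hmode
    field_simp at h
    linarith [h]
  have hrec := besselK_recurrence ((r-3)/2) hypos
  have e1 : (r-3)/2+1 = (r-1)/2 := by ring
  have e2 : (r-3)/2-1 = (r-5)/2 := by ring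
  rw [e1, e2, ← hP, ← hQ, ← hZ] at hrec
  have hy0 : y ≠ 0 := ne_of_gt hypos
  have hrec2 : y*(Q - Z) = (r-3)*P := by
    rw [hrec]
    calc y*(2*((r-3)/2)/y*P) = (y/y)*((r-3)*P) := by ring
      _ = (r-3)*P := by rw [div_self hy0]; ring
  have hZθy : θ*y*Z = (s*y - (r-3)*θ)*P := by
    linear_combination -θ*hrec2 - y*hPQ
  clear_value P Q Z
  refine ⟨?_, ?_, ?_⟩
  · -- case 4 < r
    intro hr
    have hlam : -(1/2:ℝ) < (r-5)/2 := by linarith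
    have ratio := besselK_ratio ((r-5)/2) hlam hypos
    have e3 : (r-5)/2+1 = (r-3)/2 := by ring
    have e4 : (r-5)/2+1/2 = (r-4)/2 := by ring
    rw [e3, e4, ← hP, ← hZ] at ratio
    set R := Real.sqrt (((r-4)/2)^2 + y^2) with hR
    have hRnn : 0 ≤ R := Real.sqrt_nonneg _
    have hR2 : R^2 = ((r-4)/2)^2 + y^2 := Real.sq_sqrt (by positivity)
    clear_value R
    have hμpos : 0 < (r-4)/2 := by linarith
    have t1 : θ*y*(y*P) < θ*y*(((r-4)/2 + R)*Z) :=
      mul_lt_mul_of_pos_left ratio (mul_pos hθ hypos)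
    have t2 : θ*y*(((r-4)/2 + R)*Z) = ((r-4)/2 + R)*(s*y - (r-3)*θ)*P := by
      linear_combination ((r-4)/2 + R)*hZθy
    have key2 : θ*y^2 < ((r-4)/2 + R)*(s*y - (r-3)*θ) := by
      have h8 : (θ*y^2)*P < (((r-4)/2 + R)*(s*y - (r-3)*θ))*P := by
        linarith only [t1, t2]
      exact lt_of_mul_lt_mul_right h8 hPpos.le
    have hμR : 0 < (r-4)/2 + R := by linarith
    have h7 : ((r-4)/2 + R)*(θ*(R - (r-4)/2)) = θ*y^2 := by
      linear_combination θ*hR2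
    have hRa : θ*R < s*y - (r-2)/2*θ := by
      have h9 : ((r-4)/2 + R)*(θ*(R - (r-4)/2)) < ((r-4)/2 + R)*(s*y - (r-3)*θ) := by
        rw [h7]; exact key2
      have h10 := lt_of_mul_lt_mul_left h9 hμR.le
      linarith
    have hsy : (r-2)/2*θ < s*y := by linarith [hRa, mul_nonneg hθ.le hRnn]
    have hsq : (θ*R)^2 < (s*y - (r-2)/2*θ)^2 := by
      have h20 : 0 ≤ θ*R := mul_nonneg hθ.le hRnn
      have h21 : 0 < s*y - (r-2)/2*θ := lt_of_le_of_lt h20 hRa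
      have hba : 0 < (s*y - (r-2)/2*θ) + θ*R := by linarith only [h20, h21]
      nlinarith only [hRa, hba]
    have hθR : (θ*R)^2 = θ^2*((r-4)/2)^2 + θ^2*y^2 := by
      rw [mul_pow, hR2]; ring
    have hsy2 : s^2*y^2 = (θ^2+σ^2)*y^2 := by rw [hs2]
    have hf : 0 < σ^2*y^2 - 2*((r-2)/2)*s*θ*y + θ^2*((r-2)/2)^2 - θ^2*((r-4)/2)^2 := by
      linarith only [hsq, hθR, hsy2]
    set g := σ^2*y - (r-2)/2*s*θ with hg
    clear_value g
    have hapos : 0 < (r-2)/2 := by linarith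
    have hyg : 0 < y*g := by
      rw [hg]
      linarith only [hf, mul_pos (mul_pos hapos hθ) (sub_pos.2 hsy),
        sq_nonneg ((r-4)/2*θ)]
    have hgpos : 0 < g := by nlinarith only [hyg, hypos]
    set E := ((r-2)/2)^2*θ^2 + ((r-4)/2)^2*σ^2 with hE
    clear_value E
    have hEnn : 0 ≤ E := by rw [hE]; positivity
    have hid : g^2 - θ^2*E = σ^2*(σ^2*y^2 - 2*((r-2)/2)*s*θ*y + θ^2*((r-2)/2)^2
        - θ^2*((r-4)/2)^2) := by
      rw [hg, hE]
      linear_combination ((r-2)/2)^2*θ^2*hs2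
    have hgsq : θ^2*E < g^2 := by
      linarith only [hid, mul_pos (mul_pos hσ hσ) hf]
    have hgE : θ*Real.sqrt E < g := by
      have h11 : Real.sqrt (θ^2*E) < Real.sqrt (g^2) :=
        Real.sqrt_lt_sqrt (by positivity) hgsq
      rwa [Real.sqrt_sq hgpos.le, Real.sqrt_mul (sq_nonneg θ) E,
        Real.sqrt_sq hθ.le] at h11
    have hD : (θ^2*(r-2)^2 + σ^2*(r-4)^2)/(θ^2+σ^2) = (2*Real.sqrt E/s)^2 := by
      rw [div_pow, mul_pow, Real.sq_sqrt hEnn, hE, ← hs2]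
      ring
    rw [hD, Real.sqrt_sq (by positivity)]
    have h12 : θ*Real.sqrt E/s < x - (r-2)/2*θ := by
      rw [div_lt_iff₀ hspos]
      linarith only [hgE, hgx, hg]
    have hfin : θ/2*(r-2+2*Real.sqrt E/s) = ((r-2)/2*θ) + θ*Real.sqrt E/s := by
      field_simp
    rw [gt_iff_lt, hfin]
    linarith [h12]
  · -- case r = 4
    intro hr
    subst hr
    have e5 : ((4:ℝ)-5)/2 = -(((4:ℝ)-3)/2) := by norm_num
    have hZP : Z = P := by rw [hZ, hP, e5, besselK_neg]
    rw [hZP] at hrec2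
    have h18 : P*(s*y - θ*y - θ) = 0 := by
      linear_combination θ*hrec2 + y*hPQ
    have h19 : s*y - θ*y - θ = 0 := by
      rcases mul_eq_zero.1 h18 with h | h
      · exact absurd h hPpos.ne'
      · exact h
    have hxval : s*x = θ*s + θ^2 := by
      have h14 : y*(s-θ) = θ := by linear_combination h19
      have h16 : σ^2 = s^2 - θ^2 := by rw [hs2]; ring
      have h15 : s*x*(s-θ) = (θ*s+θ^2)*(s-θ) := by
        calc s*x*(s-θ) = σ^2*y*(s-θ) := by rw [hgx]
          _ = (s^2-θ^2)*(y*(s-θ)) := by rw [h16]; ring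
          _ = (s^2-θ^2)*θ := by rw [h14]
          _ = (θ*s+θ^2)*(s-θ) := by ring
      have h17 : s - θ ≠ 0 := ne_of_gt (by linarith)
      exact mul_right_cancel₀ h17 h15
    have hD : (θ^2*((4:ℝ)-2)^2 + σ^2*((4:ℝ)-4)^2)/(θ^2+σ^2) = (2*θ/s)^2 := by
      rw [div_pow, mul_pow, ← hs2]
      norm_num
      ring
    rw [hD, Real.sqrt_sq (by positivity)]
    have hfin : θ/2*((4:ℝ)-2+2*θ/s) = (θ*s+θ^2)/s := by
      field_simp; ring
    rw [hfin, eq_div_iff hspos.ne']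
    linear_combination hxval
  · -- case 2 < r < 4
    rintro ⟨hr2, hr4⟩
    have hlam : -(1/2:ℝ) < (3-r)/2 := by linarith
    have ratio := besselK_ratio ((3-r)/2) hlam hypos
    have e6 : (3-r)/2+1 = -((r-5)/2) := by ring
    have e7 : (3-r)/2 = -((r-3)/2) := by ring
    have e8 : (3-r)/2+1/2 = (4-r)/2 := by ring
    rw [e8, e6] at ratio
    rw [besselK_neg] at ratio
    rw [e7, besselK_neg, ← hP, ← hZ] at ratio
    set R := Real.sqrt (((4-r)/2)^2 + y^2) with hR
    have hRnn : 0 ≤ R := Real.sqrt_nonneg _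
    have hR2 : R^2 = ((4-r)/2)^2 + y^2 := Real.sq_sqrt (by positivity)
    clear_value R
    have hμpos : 0 < (4-r)/2 := by linarith
    have hapos : 0 < (r-2)/2 := by linarith
    have hRa : s*y - (r-2)/2*θ < θ*R := by
      have t1 : θ*(y*Z) < θ*(((4-r)/2 + R)*P) := mul_lt_mul_of_pos_left ratio hθ
      have t2 : y*(θ*(y*Z)) = y*((s*y - (r-3)*θ)*P) := by linear_combination y*hZθy
      have t3 : (s*y - (r-3)*θ)*P < (((4-r)/2 + R)*θ)*P := by
        have h8 : y*((s*y - (r-3)*θ)*P) < y*((((4-r)/2 + R)*θ)*P) := by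
          linarith only [mul_lt_mul_of_pos_left t1 hypos, t2]
        exact lt_of_mul_lt_mul_left h8 hypos.le
      have h10 := lt_of_mul_lt_mul_right t3 hPpos.le
      linarith
    set g := σ^2*y - (r-2)/2*s*θ with hg
    clear_value g
    set E := ((r-2)/2)^2*θ^2 + ((4-r)/2)^2*σ^2 with hE
    clear_value E
    have hEpos : 0 < E := by rw [hE]; positivity
    have hgoal : g < θ*Real.sqrt E → x < θ/2 * (r - 2 +
        Real.sqrt ((θ^2*(r-2)^2 + σ^2*(r-4)^2)/(θ^2+σ^2))) := by
      intro hgE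
      have hD : (θ^2*(r-2)^2 + σ^2*(r-4)^2)/(θ^2+σ^2) = (2*Real.sqrt E/s)^2 := by
        rw [div_pow, mul_pow, Real.sq_sqrt hEpos.le, hE, ← hs2]
        ring
      rw [hD, Real.sqrt_sq (by positivity)]
      have h12 : x - (r-2)/2*θ < θ*Real.sqrt E/s := by
        rw [lt_div_iff₀ hspos]
        linarith only [hgE, hgx, hg]
      have hfin : θ/2*(r-2+2*Real.sqrt E/s) = ((r-2)/2*θ) + θ*Real.sqrt E/s := by
        field_simp
      rw [hfin]
      linarith [h12]
    apply hgoal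
    rcases le_or_gt g 0 with hgle | hgpos
    · have : 0 < θ*Real.sqrt E := mul_pos hθ (Real.sqrt_pos.2 hEpos)
      linarith
    · have hsg : s*g = σ^2*(s*y) - (r-2)/2*θ*(θ^2+σ^2) := by
        rw [hg]; linear_combination (-((r-2)/2)*θ)*hs2
      have hsy : (r-2)/2*θ < s*y := by
        nlinarith only [mul_pos hspos hgpos, hsg, mul_pos hσ hσ,
          mul_pos (mul_pos hapos hθ) (mul_pos hθ hθ)]
      have hsq : (s*y - (r-2)/2*θ)^2 < (θ*R)^2 := by
        have hba : 0 < θ*R + (s*y - (r-2)/2*θ) := by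
          linarith only [hsy, mul_nonneg hθ.le hRnn]
        nlinarith only [hRa, hba]
      have hθR : (θ*R)^2 = θ^2*((4-r)/2)^2 + θ^2*y^2 := by
        rw [mul_pow, hR2]; ring
      have hsy2 : s^2*y^2 = (θ^2+σ^2)*y^2 := by rw [hs2]
      have hf : σ^2*y^2 - 2*((r-2)/2)*s*θ*y + θ^2*((r-2)/2)^2 - θ^2*((4-r)/2)^2 < 0 := by
        linarith only [hsq, hθR, hsy2]
      have hid : g^2 - θ^2*E = σ^2*(σ^2*y^2 - 2*((r-2)/2)*s*θ*y + θ^2*((r-2)/2)^2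
          - θ^2*((4-r)/2)^2) := by
        rw [hg, hE]
        linear_combination ((r-2)/2)^2*θ^2*hs2
      have hgsq : g^2 < θ^2*E := by
        linarith only [hid, mul_neg_of_pos_of_neg (mul_pos hσ hσ) hf]
      have h11 : Real.sqrt (g^2) < Real.sqrt (θ^2*E) :=
        Real.sqrt_lt_sqrt (by positivity) hgsq
      rwa [Real.sqrt_sq hgpos.le, Real.sqrt_mul (sq_nonneg θ) E,
        Real.sqrt_sq hθ.le] at h11
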